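/- arXiv:2206.05509 — 2 statements merged into one kernel-verified Lean document; each statement's English description precedes it below -/
import Mathlib

section
/- Let X be a set with two binary relations R and R'. Define, for subsets of X, U ≺ V iff R[U] ⊆ V and ◇U = R'⁻¹[U]. Then the following are equivalent: (1) for all subsets A, B ⊆ X, A ≺ B implies ◇A ≺ ◇B; (2) for all w ∈ X, R[R'⁻¹[{w}]] ⊆ R'⁻¹[R[{w}]], i.e., for all u, v, w with R' v w and R v u there exists t with R w t and R' u t. -/
/-- proximity preservation of the diamond `◇U = R'⁻¹[U]` with respect to the
subordination `U ≺ V ↔ R[U] ⊆ V` corresponds to the interaction condition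
`∀ w, R[R'⁻¹[{w}]] ⊆ R'⁻¹[R[{w}]]`. -/
theorem proximity_preserving_correspondence {X : Type*} (R R' : X → X → Prop) :
    (∀ A B : Set X,
        {y | ∃ x ∈ A, R x y} ⊆ B →
        {y | ∃ x ∈ {x | ∃ y, R' x y ∧ y ∈ A}, R x y} ⊆ {x | ∃ y, R' x y ∧ y ∈ B}) ↔
    (∀ u v w : X, R' v w → R v u → ∃ t : X, R w t ∧ R' u t) := by
  constructor
  · intro h u v w hvw hvu
    have := h {w} {t | R w t} (by rintro y ⟨x, rfl, hxy⟩; exact hxy) ⟨v, ⟨w, hvw, rfl⟩, hvu⟩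
    obtain ⟨t, h1, h2⟩ := this
    exact ⟨t, h2, h1⟩
  · rintro h A B hAB u ⟨v, ⟨w, hvw, hwA⟩, hvu⟩
    obtain ⟨t, hwt, hut⟩ := h u v w hvw hvu
    exact ⟨t, hut, hAB ⟨w, hwA, hwt⟩⟩
end

section
/- Let f : A → B be an order-preserving map between Boolean algebras where A embeds densely and compactly into a complete Boolean algebra A^δ (the canonical extension) and similarly for B. If f preserves finite joins (f(⊥) = ⊥ and f(a ⊔ b) = f(a) ⊔ f(b)), then its σ-extension f^σ(u) = ⨆{⨅{f(a) : x ≤ a ∈ A} : u ≥ x closed} preserves finite joins on A^δ: f^σ(⊥) = ⊥ and f^σ(u ⊔ v) = f^σ(u) ⊔ f^σ(v) for all closed elements u, v of A^δ. -/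
/-- An element of the canonical extension is closed if it is a meet of elements of `A`. -/
def IsClosedElt {A Aδ : Type*} [CompleteBooleanAlgebra Aδ] (eA : A → Aδ) (x : Aδ) : Prop :=
  ∃ S : Set A, x = ⨅ a ∈ S, eA a

/-- An element of the canonical extension is open if it is a join of elements of `A`. -/
def IsOpenElt {A Aδ : Type*} [CompleteBooleanAlgebra Aδ] (eA : A → Aδ) (x : Aδ) : Prop :=
  ∃ S : Set A, x = ⨆ a ∈ S, eA a

/-- The σ-extension of a map `f : A → B` to the canonical extensions. -/
noncomputable def sigmaExt {A B Aδ Bδ : Type*}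
    [CompleteBooleanAlgebra Aδ] [CompleteBooleanAlgebra Bδ]
    (eA : A → Aδ) (eB : B → Bδ) (f : A → B) (u : Aδ) : Bδ :=
  ⨆ x ∈ {x : Aδ | IsClosedElt eA x ∧ x ≤ u}, ⨅ a ∈ {a : A | x ≤ eA a}, eB (f a)

/-- the σ-extension of a finite-join-preserving order-preserving map
between Boolean algebras preserves finite joins of closed elements of the canonical
extension (and `⊥`). -/
theorem sigma_extension_preserves_finite_joins
    {A B Aδ Bδ : Type*} [BooleanAlgebra A] [BooleanAlgebra B]
    [CompleteBooleanAlgebra Aδ] [CompleteBooleanAlgebra Bδ]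
    (eA : A → Aδ) (eB : B → Bδ)
    -- the embeddings are Boolean algebra embeddings
    (heA_le : ∀ a b : A, a ≤ b ↔ eA a ≤ eA b)
    (heA_bot : eA ⊥ = ⊥) (heA_top : eA ⊤ = ⊤)
    (heA_inf : ∀ a b : A, eA (a ⊓ b) = eA a ⊓ eA b)
    (heA_sup : ∀ a b : A, eA (a ⊔ b) = eA a ⊔ eA b)
    (heB_le : ∀ a b : B, a ≤ b ↔ eB a ≤ eB b)
    (heB_bot : eB ⊥ = ⊥) (heB_top : eB ⊤ = ⊤)
    (heB_inf : ∀ a b : B, eB (a ⊓ b) = eB a ⊓ eB b)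
    (heB_sup : ∀ a b : B, eB (a ⊔ b) = eB a ⊔ eB b)
    -- denseness
    (hA_dense : ∀ u : Aδ,
      u = ⨆ x ∈ {x : Aδ | IsClosedElt eA x ∧ x ≤ u}, x ∧
      u = ⨅ y ∈ {y : Aδ | IsOpenElt eA y ∧ u ≤ y}, y)
    (hB_dense : ∀ u : Bδ,
      u = ⨆ x ∈ {x : Bδ | IsClosedElt eB x ∧ x ≤ u}, x ∧
      u = ⨅ y ∈ {y : Bδ | IsOpenElt eB y ∧ u ≤ y}, y)
    -- compactness
    (hA_cpt : ∀ S T : Set A, (⨅ a ∈ S, eA a) ≤ (⨆ b ∈ T, eA b) →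
      ∃ S₀ T₀ : Finset A, ↑S₀ ⊆ S ∧ ↑T₀ ⊆ T ∧
        (⨅ a ∈ S₀, eA a) ≤ (⨆ b ∈ T₀, eA b))
    (hB_cpt : ∀ S T : Set B, (⨅ a ∈ S, eB a) ≤ (⨆ b ∈ T, eB b) →
      ∃ S₀ T₀ : Finset B, ↑S₀ ⊆ S ∧ ↑T₀ ⊆ T ∧
        (⨅ a ∈ S₀, eB a) ≤ (⨆ b ∈ T₀, eB b))
    -- the map f
    (f : A → B)
    (hf_mono : ∀ a b : A, a ≤ b → f a ≤ f b)
    (hf_bot : f ⊥ = ⊥)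
    (hf_sup : ∀ a b : A, f (a ⊔ b) = f a ⊔ f b) :
    sigmaExt eA eB f ⊥ = ⊥ ∧
    ∀ u v : Aδ, IsClosedElt eA u → IsClosedElt eA v →
      sigmaExt eA eB f (u ⊔ v) = sigmaExt eA eB f u ⊔ sigmaExt eA eB f v := by

  set g : Aδ → Bδ := fun u => ⨅ a ∈ {a : A | u ≤ eA a}, eB (f a) with hg
  have g_mono : ∀ {x y : Aδ}, x ≤ y → g x ≤ g y := by
    intro x y hxy
    exact le_iInf₂ fun a ha => iInf₂_le a (hxy.trans ha)
  have hsig_le : ∀ u : Aδ, sigmaExt eA eB f u ≤ g u := by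
    intro u
    exact iSup₂_le fun x hx => g_mono hx.2
  have hsig_ge : ∀ u x : Aδ, IsClosedElt eA x → x ≤ u → g x ≤ sigmaExt eA eB f u := by
    intro u x hx hxu
    exact le_iSup₂ (f := fun x _ => ⨅ a ∈ {a : A | x ≤ eA a}, eB (f a)) x ⟨hx, hxu⟩
  constructor
  · refine le_bot_iff.mp ((hsig_le ⊥).trans ?_)
    have h1 : g ⊥ ≤ eB (f ⊥) := by
      simp only [hg]
      exact iInf₂_le (⊥ : A) (show (⊥ : Aδ) ≤ eA ⊥ from bot_le)
    simpa [hf_bot, heB_bot] using h1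
  · intro u v hu hv
    apply le_antisymm
    · refine (hsig_le _).trans ?_
      have hdist : g u ⊔ g v =
          ⨅ a ∈ {a : A | u ≤ eA a}, ⨅ b ∈ {b : A | v ≤ eA b}, (eB (f a) ⊔ eB (f b)) := by
        simp only [hg, iInf_sup_eq, sup_iInf_eq]
        rw [iInf₂_comm]
      calc g (u ⊔ v) ≤ ⨅ a ∈ {a : A | u ≤ eA a}, ⨅ b ∈ {b : A | v ≤ eA b},
              (eB (f a) ⊔ eB (f b)) := by
            refine le_iInf₂ fun a ha => le_iInf₂ fun b hb => ?_
            have hab : u ⊔ v ≤ eA (a ⊔ b) := by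
              rw [heA_sup]; exact sup_le_sup ha hb
            calc g (u ⊔ v) ≤ eB (f (a ⊔ b)) := iInf₂_le (a ⊔ b) hab
              _ = eB (f a) ⊔ eB (f b) := by rw [hf_sup, heB_sup]
        _ = g u ⊔ g v := hdist.symm
        _ ≤ sigmaExt eA eB f u ⊔ sigmaExt eA eB f v :=
            sup_le_sup (hsig_ge u u hu le_rfl) (hsig_ge v v hv le_rfl)
    · have hsig_mono : ∀ {a b : Aδ}, a ≤ b → sigmaExt eA eB f a ≤ sigmaExt eA eB f b := by
        intro a b h
        exact iSup₂_le fun x hx =>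
          le_iSup₂ (f := fun x _ => ⨅ a ∈ {a : A | x ≤ eA a}, eB (f a)) x ⟨hx.1, hx.2.trans h⟩
      exact sup_le (hsig_mono le_sup_left) (hsig_mono le_sup_right)
end
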